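/- Let X₁, X₂ be elements of a commutative ring. The determinant of the 4×4 matrix whose first two rows are (1, Xᵢ, Xᵢ², Xᵢ³) for i = 1, 2 and whose last two rows are (1, 2Xᵢ, 3Xᵢ², 4Xᵢ³) for i = 1, 2 equals −X₁X₂(X₂ − X₁)⁴. -/

import Mathlib

theorem det_4x4_confluent {R : Type*} [CommRing R] (X₁ X₂ : R) :
    Matrix.det !![1, X₁, X₁ ^ 2, X₁ ^ 3;
                  1, X₂, X₂ ^ 2, X₂ ^ 3;
                  1, 2 * X₁, 3 * X₁ ^ 2, 4 * X₁ ^ 3;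
                  1, 2 * X₂, 3 * X₂ ^ 2, 4 * X₂ ^ 3]
      = -(X₁ * X₂ * (X₂ - X₁) ^ 4) := by
  simp [Matrix.det_succ_row_zero, Fin.sum_univ_succ, Fin.succAbove, Fin.castSucc, Fin.castAdd, Fin.castLE, show ((2:Fin 3):Fin 4) = 2 from rfl]
  ring
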